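/- arXiv:0911.0342 — 2 statements merged into one kernel-verified Lean document; each statement's English description precedes it below -/
import Mathlib

section
/- For each prime p, there are only finitely many partitions λ such that λ is unbroken, doubly-singular, and a 2p-core. -/
/-- A partition: weakly decreasing sequence of non-negative integers (indexed from 1,
with the convention `μ 0 = 0`), with finitely many nonzero terms. -/
def IsPartition (μ : ℕ → ℕ) : Prop :=
  μ 0 = 0 ∧ (∀ i, 1 ≤ i → μ (i + 1) ≤ μ i) ∧ ∃ N, ∀ i, N ≤ i → μ i = 0

/-- The conjugate partition: `conj μ j = |{i ≥ 1 : μ i ≥ j}|`. -/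
noncomputable def conj (μ : ℕ → ℕ) (j : ℕ) : ℕ :=
  Nat.card {i : ℕ // 1 ≤ i ∧ j ≤ μ i}

/-- `(i,j)` is a node of the Young diagram of `μ`. -/
def IsNode (μ : ℕ → ℕ) (i j : ℕ) : Prop := 1 ≤ i ∧ 1 ≤ j ∧ j ≤ μ i

/-- The hook length `h_μ(i,j) = 1 + μ_i - j + μ'_j - i` (as an integer). -/
noncomputable def hook (μ : ℕ → ℕ) (i j : ℕ) : ℤ :=
  1 + (μ i : ℤ) - (j : ℤ) + (conj μ j : ℤ) - (i : ℤ)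

/-- `μ` is broken: there exist `1 < c < d` with `μ_{c-1} - μ_c > 1` and `μ_{d-1} = μ_d > 0`. -/
def Broken (μ : ℕ → ℕ) : Prop :=
  ∃ c d : ℕ, 1 < c ∧ c < d ∧ μ c + 1 < μ (c - 1) ∧ μ (d - 1) = μ d ∧ 0 < μ d

/-- `μ` is 2-singular: some `μ_i = μ_{i+1} > 0` (with `i ≥ 1`). -/
def TwoSingular (μ : ℕ → ℕ) : Prop := ∃ i : ℕ, 1 ≤ i ∧ μ i = μ (i + 1) ∧ 0 < μ i

/-- `μ` is an `e`-core: no hook length is divisible by `e`. -/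
def IsECore (e : ℕ) (μ : ℕ → ℕ) : Prop :=
  ∀ i j : ℕ, IsNode μ i j → ¬ (e : ℤ) ∣ hook μ i j

/-- `μ` is an `e`-JM partition. -/
def IsJM (e : ℕ) (μ : ℕ → ℕ) : Prop :=
  ∀ i j : ℕ, IsNode μ i j → (e : ℤ) ∣ hook μ i j →
    (∀ k, 1 ≤ k → k ≤ μ i → (e : ℤ) ∣ hook μ i k) ∨
    (∀ k, 1 ≤ k → k ≤ conj μ j → (e : ℤ) ∣ hook μ k j)

section helpers
variable {μ : ℕ → ℕ}

lemma part_mono (hP : IsPartition μ) {i k : ℕ} (hi : 1 ≤ i) (hik : i ≤ k) : μ k ≤ μ i := by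
  induction k, hik using Nat.le_induction with
  | base => exact le_refl _
  | succ n hn ih => exact le_trans (hP.2.1 n (by omega)) ih

lemma conj_eq_ncard (j : ℕ) : conj μ j = ({i | 1 ≤ i ∧ j ≤ μ i} : Set ℕ).ncard := rfl

lemma conj_set_finite (hP : IsPartition μ) {j : ℕ} (hj : 1 ≤ j) :
    ({i | 1 ≤ i ∧ j ≤ μ i} : Set ℕ).Finite := by
  obtain ⟨N, hN⟩ := hP.2.2
  apply (Set.finite_Icc 1 N).subset
  rintro x ⟨h1, h2⟩
  refine ⟨h1, ?_⟩
  by_contra h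
  have := hN x (by omega)
  omega

lemma ncard_Icc (a b : ℕ) : (Set.Icc a b).ncard = b + 1 - a := by
  rw [← Finset.coe_Icc, Set.ncard_coe_finset, Nat.card_Icc]

lemma conj_ge (hP : IsPartition μ) {j k : ℕ} (hj : 1 ≤ j) (hk : 1 ≤ k) (h : j ≤ μ k) :
    k ≤ conj μ j := by
  have hsub : Set.Icc 1 k ⊆ {i | 1 ≤ i ∧ j ≤ μ i} := by
    rintro x ⟨h1, h2⟩
    exact ⟨h1, le_trans h (part_mono hP h1 h2)⟩
  calc k = (Set.Icc 1 k).ncard := by rw [ncard_Icc]; omega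
    _ ≤ _ := Set.ncard_le_ncard hsub (conj_set_finite hP hj)
    _ = conj μ j := (conj_eq_ncard j).symm

lemma conj_le (hP : IsPartition μ) {j k : ℕ} (hj : 1 ≤ j) (hk : 1 ≤ k) (h : k ≤ conj μ j) :
    j ≤ μ k := by
  by_contra hlt
  have hsub : {i | 1 ≤ i ∧ j ≤ μ i} ⊆ Set.Icc 1 (k - 1) := by
    rintro x ⟨h1, h2⟩
    refine ⟨h1, ?_⟩
    by_contra hx
    have : μ x ≤ μ k := part_mono hP hk (by omega)
    omega
  have := Set.ncard_le_ncard hsub (Set.finite_Icc _ _)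
  rw [← conj_eq_ncard, ncard_Icc] at this
  omega

lemma conj_mono (hP : IsPartition μ) {j j' : ℕ} (hj : 1 ≤ j) (hjj : j ≤ j') :
    conj μ j' ≤ conj μ j := by
  rcases Nat.eq_zero_or_pos (conj μ j') with h | h
  · omega
  · exact conj_ge hP hj h (le_trans hjj (conj_le hP (by omega) h le_rfl))

lemma hook_eq (hP : IsPartition μ) {i j : ℕ} (hi : 1 ≤ i) (hj : 1 ≤ j) (hji : j ≤ μ i) :
    hook μ i j = (((μ i - j) + (conj μ j - i) + 1 : ℕ) : ℤ) := by
  have h1 : i ≤ conj μ j := conj_ge hP hj hi hji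
  simp only [hook]
  omega

end helpers

lemma key {p : ℕ} (hp : 2 ≤ p) {μ : ℕ → ℕ} (hP : IsPartition μ) (hNB : ¬ Broken μ)
    (hTS : TwoSingular μ) (hTS' : TwoSingular (conj μ)) (hcore : IsECore (2*p) μ) :
    (∀ i, μ i ≤ 4*(p*p)+4*p) ∧ ∀ i, 4*(p*p)+4*p < i → μ i = 0 := by
  classical
  set E := 2*p with hE
  have hE4 : 4 ≤ E := by omega
  obtain ⟨N, hN⟩ := hP.2.2
  -- ℕ-version of the core condition
  have hhook : ∀ i j, 1 ≤ i → 1 ≤ j → j ≤ μ i → ¬ (E ∣ (μ i - j) + (conj μ j - i) + 1) := by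
    intro i j hi hj hji hdvd
    exact hcore i j ⟨hi, hj, hji⟩
      (by rw [hook_eq hP hi hj hji]; exact_mod_cast Int.natCast_dvd_natCast.2 hdvd)
  -- the greatest repeat index d
  set P : ℕ → Prop := fun d => 2 ≤ d ∧ μ (d-1) = μ d ∧ 0 < μ d with hPdef
  set d := Nat.findGreatest P N with hd
  obtain ⟨i₀, hi₀, hi₀e, hi₀p⟩ := hTS
  have hPi : P (i₀+1) := by
    refine ⟨by omega, ?_, by omega⟩
    simpa using hi₀e
  have hi₀N : i₀ + 1 ≤ N := by
    by_contra hcon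
    have := hN (i₀+1) (by omega)
    omega
  have hdP : P d := Nat.findGreatest_spec hi₀N hPi
  obtain ⟨hd2, hdrep, hdpos⟩ := hdP
  have hnorep : ∀ k, d < k → ¬ (μ (k-1) = μ k ∧ 0 < μ k) := by
    intro k hk hcon
    rcases le_or_gt k N with hkN | hkN
    · exact Nat.findGreatest_is_greatest hk hkN ⟨by omega, hcon.1, hcon.2⟩
    · have := hN k (by omega); omega
  -- conj μ (μ d) = d
  have hconjm : conj μ (μ d) = d := by
    have h1 : d ≤ conj μ (μ d) := conj_ge hP hdpos (by omega) le_rfl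
    have h2 : conj μ (μ d) ≤ d := by
      by_contra hcon
      have h3 : μ d ≤ μ (d+1) := conj_le hP hdpos (by omega) (by omega)
      have h4 : μ (d+1) ≤ μ d := hP.2.1 d (by omega)
      exact hnorep (d+1) (by omega) ⟨by simpa using (by omega : μ d = μ (d+1)), by omega⟩
    omega
  -- small steps above d :  μ c ≤ μ (c+1) + 1 for 1 ≤ c, c+1 < d
  have hstep : ∀ c, 1 ≤ c → c + 1 < d → μ c ≤ μ (c+1) + 1 := by
    intro c hc1 hcd
    by_contra hcon
    exact hNB ⟨c+1, d, by omega, hcd, by simpa using (by omega : μ (c+1) + 1 < μ c), hdrep, hdpos⟩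
  -- μ 1 bound:  μ 1 + 1 ≤ μ d + d - 1
  have hmu1 : ∀ j, 1 ≤ j → j ≤ d - 1 → μ (d - j) + (d - j) ≤ μ d + d - 1 := by
    intro j
    induction j with
    | zero => omega
    | succ j ih =>
      intro _ hj
      rcases Nat.eq_zero_or_pos j with hj0 | hj0
      · subst hj0
        show μ (d-1) + (d-1) ≤ μ d + d - 1
        have : μ (d-1) = μ d := hdrep
        omega
      · have h1 := ih hj0 (by omega)
        have h2 : μ (d-(j+1)) ≤ μ (d-(j+1)+1) + 1 := hstep _ (by omega) (by omega)
        rw [show d-(j+1)+1 = d-j by omega] at h2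
        omega
  have hmu1' : μ 1 + 1 ≤ μ d + d - 1 := by
    have := hmu1 (d-1) (by omega) le_rfl
    rw [show d - (d-1) = 1 by omega] at this
    omega
  -- row-interval argument : μ d + (conj μ 1 - d) + 1 ≤ E - 1
  have hrd : d ≤ conj μ 1 := by
    calc d = conj μ (μ d) := hconjm.symm
      _ ≤ conj μ 1 := conj_mono hP (by omega) hdpos
  have hrowC : μ d + (conj μ 1 - d) + 2 ≤ E := by
    by_contra hcon
    push_neg at hcon
    have hQex : ∃ j, 1 ≤ j ∧ (μ d - j) + (conj μ j - d) + 1 ≤ E := by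
      refine ⟨μ d, hdpos, ?_⟩
      rw [hconjm]
      omega
    obtain ⟨j₀, hj₀1, hj₀a, hj₀min⟩ : ∃ j, 1 ≤ j ∧ ((μ d - j) + (conj μ j - d) + 1 ≤ E) ∧
        ∀ j', j' < j → ¬ (1 ≤ j' ∧ (μ d - j') + (conj μ j' - d) + 1 ≤ E) := by
      exact ⟨Nat.find hQex, (Nat.find_spec hQex).1, (Nat.find_spec hQex).2,
        fun j' hj' => Nat.find_min hQex hj'⟩
    have hj₀m : j₀ ≤ μ d := by
      by_contra hcon2
      exact hj₀min (μ d) (by omega) ⟨hdpos, by rw [hconjm]; omega⟩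
    have hq : d ≤ conj μ j₀ := conj_ge hP hj₀1 (by omega) hj₀m
    rcases le_or_gt E ((μ d - j₀) + (conj μ j₀ - d) + 1 + 1) with hcase | hcase
    · -- E is one of the two hooks in rows d-1, d at column j₀
      rcases (by omega : E = (μ d - j₀) + (conj μ j₀ - d) + 1 ∨
          E = (μ d - j₀) + (conj μ j₀ - d) + 2) with he | he
      · exact hhook d j₀ (by omega) hj₀1 hj₀m (he ▸ dvd_refl E)
      · refine hhook (d-1) j₀ (by omega) hj₀1 (by omega) ?_
        rw [show (μ (d-1) - j₀) + (conj μ j₀ - (d-1)) + 1 = E by omega]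
    · -- E falls in a gap : impossible since gaps need repeated parts < μ d
      have hj₀2 : 2 ≤ j₀ := by
        by_contra hcon2
        have hj1 : j₀ = 1 := by omega
        rw [hj1] at hj₀a hq
        rw [hj1] at hcase
        omega
      have hgap : E + 1 ≤ (μ d - (j₀-1)) + (conj μ (j₀-1) - d) + 1 := by
        have hmin := hj₀min (j₀ - 1) (by omega)
        push_neg at hmin
        have := hmin (by omega)
        omega
      have hq1 : conj μ j₀ ≤ conj μ (j₀-1) := conj_mono hP (by omega) (by omega)
      have hjump : conj μ j₀ + 2 ≤ conj μ (j₀-1) := by omega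
      have hμq1 : j₀ - 1 ≤ μ (conj μ j₀ + 1) := conj_le hP (by omega) (by omega) (by omega)
      have hμq2 : j₀ - 1 ≤ μ (conj μ j₀ + 2) := conj_le hP (by omega) (by omega) (by omega)
      have hμq1' : μ (conj μ j₀ + 1) < j₀ := by
        by_contra hcon2
        have : conj μ j₀ + 1 ≤ conj μ j₀ := conj_ge hP hj₀1 (by omega) (by omega)
        omega
      have hμq21 : μ (conj μ j₀ + 2) ≤ μ (conj μ j₀ + 1) := hP.2.1 (conj μ j₀ + 1) (by omega)
      refine hnorep (conj μ j₀ + 2) (by omega) ⟨?_, by omega⟩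
      show μ (conj μ j₀ + 1) = μ (conj μ j₀ + 2)
      omega
  -- column repeat
  obtain ⟨j₁, hj₁1, hj₁e, hj₁p⟩ := hTS'
  have hje : conj μ (j₁+1) = conj μ j₁ := hj₁e.symm
  have htpos : 0 < conj μ j₁ := hj₁p
  have hμh : j₁ + 1 ≤ μ (conj μ j₁) := conj_le hP (by omega) htpos (by omega)
  have hμh1 : μ (conj μ j₁ + 1) < j₁ := by
    by_contra hcon
    have : conj μ j₁ + 1 ≤ conj μ j₁ := conj_ge hP hj₁1 (by omega) (by omega)
    omega
  have hhd : d ≤ conj μ j₁ + 1 := by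
    by_contra hcon
    push_neg at hcon
    refine hNB ⟨conj μ j₁ + 1, d, by omega, by omega, ?_, hdrep, hdpos⟩
    show μ (conj μ j₁ + 1) + 1 < μ (conj μ j₁ + 1 - 1)
    rw [show conj μ j₁ + 1 - 1 = conj μ j₁ from rfl]
    omega
  -- telescoping sum
  have tele : ∀ M, d - 1 ≤ M → (∑ k ∈ Finset.Icc d M, (μ (k-1) - μ k)) + μ M ≤ μ (d-1) := by
    intro M hM
    induction M, hM using Nat.le_induction with
    | base =>
      rw [show Finset.Icc d (d-1) = ∅ from Finset.Icc_eq_empty (by omega)]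
      simp
    | succ M hM ih =>
      rw [Finset.sum_Icc_succ_top (by omega : d ≤ M + 1)]
      have h1 : μ (M+1) ≤ μ M := hP.2.1 M (by omega)
      have h2 : μ (M+1-1) = μ M := by rw [show M+1-1 = M from rfl]
      omega
  -- count of multiples of E among the hooks of columns j₁, j₁+1
  have hcard1 : ((Finset.Icc 1 ((μ 1 - (j₁+1)) + (conj μ j₁ - 1) + 2)).filter
      (fun x => E ∣ x)).card = ((μ 1 - (j₁+1)) + (conj μ j₁ - 1) + 2) / E := by
    rw [show Finset.Icc 1 ((μ 1 - (j₁+1)) + (conj μ j₁ - 1) + 2)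
        = Finset.Ioc 0 ((μ 1 - (j₁+1)) + (conj μ j₁ - 1) + 2) by ext x; simp; omega]
    exact Nat.Ioc_filter_dvd_card_eq_div _ _
  have hsub : (Finset.Icc 1 ((μ 1 - (j₁+1)) + (conj μ j₁ - 1) + 2)).filter (fun x => E ∣ x)
      ⊆ (Finset.Icc d (conj μ j₁)).biUnion (fun k =>
        Finset.Ioo ((μ k - (j₁+1)) + (conj μ j₁ - k) + 2)
          ((μ (k-1) - (j₁+1)) + (conj μ j₁ - (k-1)) + 1)) := by
    intro x hx
    rw [Finset.mem_filter, Finset.mem_Icc] at hx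
    obtain ⟨⟨hx1, hx2⟩, hxd⟩ := hx
    -- x is not a small hook in row conj μ j₁
    have hnot : ¬ x ≤ μ (conj μ j₁) - j₁ := by
      intro hle
      have hj : j₁ + 1 ≤ μ (conj μ j₁) + 1 - x := by omega
      have hj' : μ (conj μ j₁) + 1 - x ≤ μ (conj μ j₁) := by omega
      have hcle : conj μ (μ (conj μ j₁) + 1 - x) ≤ conj μ j₁ := by
        calc conj μ (μ (conj μ j₁) + 1 - x) ≤ conj μ (j₁+1) := conj_mono hP (by omega) hj
          _ = conj μ j₁ := hje
      have hcge : conj μ j₁ ≤ conj μ (μ (conj μ j₁) + 1 - x) := conj_ge hP (by omega) htpos hj'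
      refine hhook (conj μ j₁) (μ (conj μ j₁) + 1 - x) htpos (by omega) hj' ?_
      rw [show (μ (conj μ j₁) - (μ (conj μ j₁) + 1 - x))
          + (conj μ (μ (conj μ j₁) + 1 - x) - conj μ j₁) + 1 = x by omega]
      exact hxd
    push_neg at hnot
    have hQex2 : ∃ k, 1 ≤ k ∧ k ≤ conj μ j₁ ∧ (μ k - (j₁+1)) + (conj μ j₁ - k) + 1 ≤ x :=
      ⟨conj μ j₁, htpos, le_rfl, by omega⟩
    obtain ⟨k₀, hk₀1, hk₀h, hk₀a, hk₀min⟩ : ∃ k, 1 ≤ k ∧ k ≤ conj μ j₁ ∧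
        ((μ k - (j₁+1)) + (conj μ j₁ - k) + 1 ≤ x) ∧
        ∀ k', k' < k → ¬ (1 ≤ k' ∧ k' ≤ conj μ j₁ ∧ (μ k' - (j₁+1)) + (conj μ j₁ - k') + 1 ≤ x) :=
      ⟨Nat.find hQex2, (Nat.find_spec hQex2).1, (Nat.find_spec hQex2).2.1,
        (Nat.find_spec hQex2).2.2, fun k' hk' => Nat.find_min hQex2 hk'⟩
    have hμk₀ : j₁ + 1 ≤ μ k₀ := le_trans hμh (part_mono hP hk₀1 hk₀h)
    -- x is bigger than both hooks at (k₀, j₁+1) and (k₀, j₁)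
    have hx3 : (μ k₀ - (j₁+1)) + (conj μ j₁ - k₀) + 3 ≤ x := by
      rcases le_or_gt x ((μ k₀ - (j₁+1)) + (conj μ j₁ - k₀) + 2) with hc | hc
      · exfalso
        rcases (by omega : x = (μ k₀ - (j₁+1)) + (conj μ j₁ - k₀) + 1 ∨
            x = (μ k₀ - (j₁+1)) + (conj μ j₁ - k₀) + 2) with he | he
        · refine hhook k₀ (j₁+1) hk₀1 (by omega) hμk₀ ?_
          rw [show (μ k₀ - (j₁+1)) + (conj μ (j₁+1) - k₀) + 1 = x by rw [hje]; omega]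
          exact hxd
        · refine hhook k₀ j₁ hk₀1 hj₁1 (by omega) ?_
          rw [show (μ k₀ - j₁) + (conj μ j₁ - k₀) + 1 = x by omega]
          exact hxd
      · omega
    have hk₀2 : 2 ≤ k₀ := by
      by_contra hc
      have hk1 : k₀ = 1 := by omega
      rw [hk1] at hx3
      omega
    have hmin := hk₀min (k₀ - 1) (by omega)
    push_neg at hmin
    have hgap2 : x + 1 ≤ (μ (k₀-1) - (j₁+1)) + (conj μ j₁ - (k₀-1)) + 1 := by
      have := hmin (by omega) (by omega)
      omega
    have hmono : μ k₀ ≤ μ (k₀ - 1) := by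
      have := hP.2.1 (k₀-1) (by omega)
      rw [show k₀-1+1 = k₀ by omega] at this
      exact this
    have hjump2 : μ k₀ + 2 ≤ μ (k₀-1) := by omega
    have hk₀d : d ≤ k₀ := by
      by_contra hc
      exact hNB ⟨k₀, d, by omega, by omega, by omega, hdrep, hdpos⟩
    rw [Finset.mem_biUnion]
    exact ⟨k₀, Finset.mem_Icc.2 ⟨hk₀d, hk₀h⟩, Finset.mem_Ioo.2 ⟨by omega, by omega⟩⟩
  have hScard2 : ((Finset.Icc 1 ((μ 1 - (j₁+1)) + (conj μ j₁ - 1) + 2)).filter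
      (fun x => E ∣ x)).card ≤ μ (d-1) := by
    calc ((Finset.Icc 1 ((μ 1 - (j₁+1)) + (conj μ j₁ - 1) + 2)).filter (fun x => E ∣ x)).card
        ≤ ((Finset.Icc d (conj μ j₁)).biUnion (fun k =>
          Finset.Ioo ((μ k - (j₁+1)) + (conj μ j₁ - k) + 2)
            ((μ (k-1) - (j₁+1)) + (conj μ j₁ - (k-1)) + 1))).card :=
          Finset.card_le_card hsub
      _ ≤ ∑ k ∈ Finset.Icc d (conj μ j₁),
          (Finset.Ioo ((μ k - (j₁+1)) + (conj μ j₁ - k) + 2)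
            ((μ (k-1) - (j₁+1)) + (conj μ j₁ - (k-1)) + 1)).card :=
          Finset.card_biUnion_le
      _ ≤ ∑ k ∈ Finset.Icc d (conj μ j₁), (μ (k-1) - μ k) := by
          refine Finset.sum_le_sum ?_
          intro k hk
          rw [Finset.mem_Icc] at hk
          rw [Nat.card_Ioo]
          have h1 : μ (conj μ j₁) ≤ μ k := part_mono hP (by omega) hk.2
          have h2 : μ k ≤ μ (k-1) := by
            have := hP.2.1 (k-1) (by omega)
            rw [show k-1+1 = k by omega] at this
            exact this
          omega
      _ ≤ μ (d-1) := by
          have := tele (conj μ j₁) (by omega)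
          omega
  -- conclude the bounds
  have hdiv : ((μ 1 - (j₁+1)) + (conj μ j₁ - 1) + 2) / E ≤ μ (d-1) := by
    rw [← hcard1]; exact hScard2
  have hlt : (μ 1 - (j₁+1)) + (conj μ j₁ - 1) + 2 < (μ (d-1) + 1) * E :=
    (Nat.div_lt_iff_lt_mul (by omega : 0 < E)).1 (by omega)
  have hm2 : μ (d-1) + 1 ≤ E - 1 := by
    have := hrowC
    omega
  have hmulE : (μ (d-1) + 1) * E ≤ (E-1) * E := Nat.mul_le_mul_right _ hm2
  have hEE : (E - 1) * E ≤ 4 * (p*p) := by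
    calc (E-1)*E ≤ E*E := Nat.mul_le_mul_right _ (by omega)
      _ = 4*(p*p) := by rw [hE]; ring
  have hht4 : conj μ j₁ < 4*(p*p) := by omega
  have hd4 : d ≤ 4*(p*p) := by omega
  have hμ14 : μ 1 ≤ 4*(p*p) + 4*p := by omega
  constructor
  · intro i
    rcases Nat.eq_zero_or_pos i with h0 | h0
    · rw [h0, hP.1]; omega
    · exact le_trans (part_mono hP le_rfl h0) hμ14
  · intro i hi
    by_contra hc
    have h1 : i ≤ conj μ 1 := conj_ge hP le_rfl (by omega) (by omega)
    have h2 : conj μ 1 ≤ 4*(p*p) + 4*p := by omega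
    omega


lemma bounded_finite (N₀ : ℕ) :
    {μ : ℕ → ℕ | (∀ i, μ i ≤ N₀) ∧ ∀ i, N₀ < i → μ i = 0}.Finite := by
  apply Set.Finite.of_finite_image (f := fun (μ : ℕ → ℕ) => fun i : Fin (N₀+1) => μ i)
  · apply Set.Finite.subset (Set.Finite.pi (fun _ : Fin (N₀+1) => Set.finite_Iic N₀))
    rintro f ⟨μ, hμ, rfl⟩
    rw [Set.mem_pi]
    intro i _
    exact hμ.1 i
  · rintro μ hμ ν hν hfe
    funext i
    rcases le_or_gt i N₀ with hle | hlt
    · have := congrFun hfe ⟨i, by omega⟩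
      simpa using this
    · rw [hμ.2 i hlt, hν.2 i hlt]


/-- For each prime `p`, there are only finitely many unbroken doubly-singular
`2p`-cores. -/
theorem finitely_many_unbroken_doublySingular_cores (p : ℕ) (hp : p.Prime) :
    {μ : ℕ → ℕ | IsPartition μ ∧ ¬ Broken μ ∧ TwoSingular μ ∧
      TwoSingular (conj μ) ∧ IsECore (2 * p) μ}.Finite := by
  apply Set.Finite.subset (bounded_finite (4*(p*p)+4*p))
  rintro μ ⟨h1, h2, h3, h4, h5⟩
  exact key hp.two_le h1 h2 h3 h4 h5
end

section
/- Let λ be an unbroken doubly-singular partition, let a be maximal with λ_{a-1} = λ_a > 0 and b maximal with λ'_{b-1} = λ'_b > 0. Then a ≤ λ'_b. -/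
lemma mono_of_partition (μ : ℕ → ℕ) (hμ : IsPartition μ) :
    ∀ i i', 1 ≤ i → i ≤ i' → μ i' ≤ μ i := by
  intro i i' h1 h2
  induction i', h2 using Nat.le_induction with
  | base => exact le_rfl
  | succ k hk ih => exact le_trans (hμ.2.1 k (h1.trans hk)) ih

lemma conj_ge_iff (μ : ℕ → ℕ) (hμ : IsPartition μ) (i j : ℕ) (hi : 1 ≤ i) (hj : 1 ≤ j) :
    i ≤ conj μ j ↔ j ≤ μ i := by
  obtain ⟨N, hN⟩ := hμ.2.2
  have hconj : conj μ j = Set.ncard {i : ℕ | 1 ≤ i ∧ j ≤ μ i} := by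
    rfl
  have hfin : {i : ℕ | 1 ≤ i ∧ j ≤ μ i}.Finite := by
    apply (Set.finite_Iio N).subset
    intro x hx
    simp only [Set.mem_setOf_eq] at hx
    simp only [Set.mem_Iio]
    by_contra h
    have := hN x (by omega)
    omega
  constructor
  · intro h
    by_contra hlt
    push_neg at hlt
    have hsub : {i : ℕ | 1 ≤ i ∧ j ≤ μ i} ⊆ Set.Icc 1 (i - 1) := by
      intro x hx
      simp only [Set.mem_setOf_eq] at hx
      simp only [Set.mem_Icc]
      refine ⟨hx.1, ?_⟩
      by_contra hxi
      have := mono_of_partition μ hμ i x hi (by omega)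
      omega
    have hcard := Set.ncard_le_ncard hsub (Set.finite_Icc 1 (i - 1))
    have : (Set.Icc 1 (i - 1)).ncard = i - 1 := by
      rw [← Finset.coe_Icc, Set.ncard_coe_finset, Nat.card_Icc]; omega
    omega
  · intro h
    have hsub : Set.Icc 1 i ⊆ {i : ℕ | 1 ≤ i ∧ j ≤ μ i} := by
      intro x hx
      simp only [Set.mem_Icc] at hx
      exact ⟨hx.1, le_trans h (mono_of_partition μ hμ x i hx.1 hx.2)⟩
    have hcard := Set.ncard_le_ncard hsub hfin
    have : (Set.Icc 1 i).ncard = i := by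
      rw [← Finset.coe_Icc, Set.ncard_coe_finset, Nat.card_Icc]; omega
    omega

/-- For an unbroken doubly-singular partition, if `a` is maximal with `μ_{a-1} = μ_a > 0`
and `b` is maximal with `μ'_{b-1} = μ'_b > 0`, then `a ≤ μ'_b`. -/
theorem a_le_conj_b (μ : ℕ → ℕ) (a b : ℕ) (hμ : IsPartition μ)
    (hub : ¬ Broken μ) (h1 : TwoSingular μ) (h2 : TwoSingular (conj μ))
    (ha2 : 2 ≤ a) (harep : μ (a - 1) = μ a ∧ 0 < μ a)
    (hamax : ∀ i, a < i → ¬ (μ (i - 1) = μ i ∧ 0 < μ i))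
    (hb2 : 2 ≤ b) (hbrep : conj μ (b - 1) = conj μ b ∧ 0 < conj μ b)
    (hbmax : ∀ i, b < i → ¬ (conj μ (i - 1) = conj μ i ∧ 0 < conj μ i)) :
    a ≤ conj μ b := by
  set c := conj μ b with hc
  have hc0 : 0 < c := hbrep.2
  have hμcb : b ≤ μ c := (conj_ge_iff μ hμ c b hc0 (by omega)).mp le_rfl
  have hμc1 : μ (c + 1) < b - 1 := by
    by_contra h
    push_neg at h
    have : c + 1 ≤ conj μ (b - 1) :=
      (conj_ge_iff μ hμ (c + 1) (b - 1) (by omega) (by omega)).mpr h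
    have := hbrep.1
    omega
  have hgap : μ (c + 1) + 1 < μ ((c + 1) - 1) := by
    simp only [Nat.add_sub_cancel]
    omega
  by_contra hac
  push_neg at hac
  rcases eq_or_lt_of_le (Nat.succ_le_of_lt hac) with heq | hlt
  · have h1 := harep.1
    rw [← heq] at h1
    have h1' : μ c = μ (c + 1) := h1
    omega
  · exact hub ⟨c + 1, a, by omega, hlt, hgap, harep.1, harep.2⟩
end
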